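/- arXiv:1404.0141 — 6 statements merged into one kernel-verified Lean document; each statement's English description precedes it below -/
import Mathlib

section
/- Let h : [0,1] → [0,∞) be a C² function with h(0) = h(1) = 0, and let c ≥ 0. Assume that for all t ∈ [0,1], h''(t) ≥ -|h'(t)| - c. Then h(t) ≤ c·t·(1-t) for all t ∈ [0,1]. -/
/-- If `h : [0,1] → [0,∞)` is C² with `h 0 = h 1 = 0`, `c ≥ 0`, and
`h'' t ≥ -|h' t| - c` on `[0,1]`, then `h t ≤ c * t * (1 - t)` on `[0,1]`. -/
theorem stmt_0 (h h' h'' : ℝ → ℝ) (c : ℝ)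
    (hc : 0 ≤ c)
    (hpos : ∀ t ∈ Set.Icc (0:ℝ) 1, 0 ≤ h t)
    (h0 : h 0 = 0) (h1 : h 1 = 0)
    (hd1 : ∀ t ∈ Set.Icc (0:ℝ) 1, HasDerivAt h (h' t) t)
    (hd2 : ∀ t ∈ Set.Icc (0:ℝ) 1, HasDerivAt h' (h'' t) t)
    (hcont : ContinuousOn h'' (Set.Icc (0:ℝ) 1))
    (hineq : ∀ t ∈ Set.Icc (0:ℝ) 1, -|h' t| - c ≤ h'' t) :
    ∀ t ∈ Set.Icc (0:ℝ) 1, h t ≤ c * t * (1 - t) := by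
  have key : ∀ ε : ℝ, 0 < ε → ∀ t ∈ Set.Icc (0:ℝ) 1,
      h t - (c * t - c * t ^ 2 + ε * Real.cos (t - 1/2)) ≤ 0 := by
    intro ε hε
    set d : ℝ → ℝ := fun s => h s - (c * s - c * s ^ 2 + ε * Real.cos (s - 1/2)) with hdDef
    set D1 : ℝ → ℝ := fun s => h' s - (c - 2*c*s - ε * Real.sin (s - 1/2)) with hD1Def
    set D2 : ℝ → ℝ := fun s => h'' s + 2*c + ε * Real.cos (s - 1/2) with hD2Def
    have hcos : ∀ s : ℝ, HasDerivAt (fun u : ℝ => Real.cos (u - 1/2)) (-Real.sin (s - 1/2)) s := by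
      intro s
      have := (Real.hasDerivAt_cos (s - 1/2)).comp s ((hasDerivAt_id s).sub_const (1/2))
      simpa [Function.comp_def] using this
    have hsin : ∀ s : ℝ, HasDerivAt (fun u : ℝ => Real.sin (u - 1/2)) (Real.cos (s - 1/2)) s := by
      intro s
      have := (Real.hasDerivAt_sin (s - 1/2)).comp s ((hasDerivAt_id s).sub_const (1/2))
      simpa [Function.comp_def] using this
    have hdd1 : ∀ s ∈ Set.Icc (0:ℝ) 1, HasDerivAt d (D1 s) s := by
      intro s hs
      have hg : HasDerivAt (fun u : ℝ => c*u - c*u^2 + ε * Real.cos (u - 1/2))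
          (c - 2*c*s - ε * Real.sin (s - 1/2)) s := by
        have h1 : HasDerivAt (fun u : ℝ => c*u) c s := by
          simpa using (hasDerivAt_id s).const_mul c
        have h2 : HasDerivAt (fun u : ℝ => c*u^2) (c * (2*s)) s := by
          simpa using (hasDerivAt_pow 2 s).const_mul c
        have h3 := (hcos s).const_mul ε
        have := (h1.sub h2).add h3
        refine this.congr_deriv ?_
        ring
      exact (hd1 s hs).sub hg
    have hdd2 : ∀ s ∈ Set.Icc (0:ℝ) 1, HasDerivAt D1 (D2 s) s := by
      intro s hs
      have h1 : HasDerivAt (fun u : ℝ => c - 2*c*u - ε * Real.sin (u - 1/2))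
          (-(2*c) - ε * Real.cos (s - 1/2)) s := by
        have ha : HasDerivAt (fun u : ℝ => c - 2*c*u) (-(2*c)) s := by
          simpa using ((hasDerivAt_id s).const_mul (2*c)).const_sub c
        exact ha.sub ((hsin s).const_mul ε)
      have := (hd2 s hs).sub h1
      refine this.congr_deriv ?_
      simp [hD2Def]
      ring
    have hdcont : ContinuousOn d (Set.Icc (0:ℝ) 1) :=
      fun s hs => (hdd1 s hs).continuousAt.continuousWithinAt
    obtain ⟨t0, ht0, hmax⟩ :=
      isCompact_Icc.exists_isMaxOn (Set.nonempty_Icc.2 zero_le_one) hdcont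
    have hcoshalf : (7:ℝ)/8 ≤ Real.cos (1/2 : ℝ) := by
      have := Real.one_sub_sq_div_two_le_cos (x := (1/2 : ℝ))
      nlinarith
    have hd0 : d 0 < 0 := by
      simp only [hdDef]
      rw [h0]
      have : Real.cos (0 - 1/2) = Real.cos (1/2) := by
        rw [show (0:ℝ) - 1/2 = -(1/2) by ring, Real.cos_neg]
      rw [this]
      nlinarith
    have hd1' : d 1 < 0 := by
      simp only [hdDef]
      rw [h1]
      have : Real.cos (1 - 1/2 : ℝ) = Real.cos (1/2) := by norm_num
      rw [this]
      nlinarith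
    have hle : ∀ t ∈ Set.Icc (0:ℝ) 1, d t ≤ 0 := by
      by_cases hint : t0 ∈ Set.Ioo (0:ℝ) 1
      · exfalso
        have hloc : IsLocalMax d t0 := hmax.isLocalMax (Icc_mem_nhds hint.1 hint.2)
        have hD1zero : D1 t0 = 0 := hloc.hasDerivAt_eq_zero (hdd1 t0 ht0)
        have hD2pos : 0 < D2 t0 := by
          have h'eq : h' t0 = (c - 2*c*t0) - ε * Real.sin (t0 - 1/2) := by
            have := hD1zero
            simp only [hD1Def] at this
            linarith
          have habs : |h' t0| ≤ c + ε/2 := by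
            rw [h'eq]
            have h1 : |c - 2*c*t0| ≤ c := by
              rw [abs_le]; constructor <;> nlinarith [ht0.1, ht0.2]
            have h2 : |Real.sin (t0 - 1/2)| ≤ 1/2 := by
              refine (Real.abs_sin_le_abs).trans ?_
              rw [abs_le]; constructor <;> linarith [ht0.1, ht0.2]
            calc |(c - 2*c*t0) - ε * Real.sin (t0 - 1/2)|
                ≤ |c - 2*c*t0| + |ε * Real.sin (t0 - 1/2)| := abs_sub _ _
              _ = |c - 2*c*t0| + ε * |Real.sin (t0 - 1/2)| := by
                  rw [abs_mul, abs_of_pos hε]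
              _ ≤ c + ε/2 := by nlinarith
          have hcosge : (7:ℝ)/8 ≤ Real.cos (t0 - 1/2) := by
            have := Real.one_sub_sq_div_two_le_cos (x := t0 - 1/2)
            nlinarith [ht0.1, ht0.2]
          have hineq' := hineq t0 ht0
          simp only [hD2Def]
          have : -|h' t0| ≥ -(c + ε/2) := by linarith [abs_nonneg (h' t0), habs]
          nlinarith
        have hD2cont : ContinuousOn D2 (Set.Icc (0:ℝ) 1) := by
          apply (hcont.add continuousOn_const).add
          exact (continuous_const.mul
            (Real.continuous_cos.comp (continuous_sub_right _))).continuousOn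
        have hev : ∀ᶠ s in nhdsWithin t0 (Set.Icc (0:ℝ) 1), 0 < D2 s :=
          (hD2cont t0 ht0).eventually (eventually_gt_nhds hD2pos)
        obtain ⟨δ, hδ, hball⟩ := Metric.mem_nhdsWithin_iff.1 hev
        set t1 : ℝ := min (t0 + δ/2) ((t0 + 1)/2) with ht1Def
        have ht0t1 : t0 < t1 := by
          apply lt_min <;> [linarith; linarith [hint.2]]
        have ht1le : t1 ≤ 1 := by
          refine (min_le_right _ _).trans ?_
          linarith [hint.2]
        have hsub : Set.Icc t0 t1 ⊆ Set.Icc (0:ℝ) 1 := fun s hs =>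
          ⟨le_trans ht0.1 hs.1, le_trans hs.2 ht1le⟩
        have hdist : ∀ s ∈ Set.Icc t0 t1, dist s t0 < δ := by
          intro s hs
          rw [Real.dist_eq, abs_of_nonneg (by linarith [hs.1])]
          have : t1 ≤ t0 + δ/2 := min_le_left _ _
          linarith [hs.2]
        have hmono1 : StrictMonoOn D1 (Set.Icc t0 t1) := by
          apply strictMonoOn_of_deriv_pos (convex_Icc t0 t1)
          · exact fun s hs => (hdd2 s (hsub hs)).continuousAt.continuousWithinAt
          · intro x hx
            rw [interior_Icc] at hx
            have hx' : x ∈ Set.Icc t0 t1 := ⟨hx.1.le, hx.2.le⟩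
            rw [(hdd2 x (hsub hx')).deriv]
            exact hball ⟨Metric.mem_ball.2 (hdist x hx'), hsub hx'⟩
        have hD1pos : ∀ s ∈ Set.Ioc t0 t1, 0 < D1 s := by
          intro s hs
          have := hmono1 (Set.left_mem_Icc.2 ht0t1.le) ⟨hs.1.le, hs.2⟩ hs.1
          rw [hD1zero] at this
          exact this
        have hmono2 : StrictMonoOn d (Set.Icc t0 t1) := by
          apply strictMonoOn_of_deriv_pos (convex_Icc t0 t1)
          · exact fun s hs => (hdd1 s (hsub hs)).continuousAt.continuousWithinAt
          · intro x hx
            rw [interior_Icc] at hx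
            have hx' : x ∈ Set.Icc t0 t1 := ⟨hx.1.le, hx.2.le⟩
            rw [(hdd1 x (hsub hx')).deriv]
            exact hD1pos x ⟨hx.1, hx.2.le⟩
        have hlt : d t0 < d t1 :=
          hmono2 (Set.left_mem_Icc.2 ht0t1.le) (Set.right_mem_Icc.2 ht0t1.le) ht0t1
        have := isMaxOn_iff.1 hmax t1 (hsub (Set.right_mem_Icc.2 ht0t1.le))
        linarith
      · have ht0end : t0 = 0 ∨ t0 = 1 := by
          rcases eq_or_lt_of_le ht0.1 with h | h
          · exact Or.inl h.symm
          · rcases eq_or_lt_of_le ht0.2 with h' | h'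
            · exact Or.inr h'
            · exact absurd ⟨h, h'⟩ hint
        have hdt0 : d t0 < 0 := by rcases ht0end with rfl | rfl <;> assumption
        intro t ht
        have := isMaxOn_iff.1 hmax t ht
        linarith
    exact hle
  intro t ht
  have hfin : ∀ ε : ℝ, 0 < ε → h t ≤ c * t * (1 - t) + ε := by
    intro ε hε
    have := key ε hε t ht
    have hcos1 : Real.cos (t - 1/2) ≤ 1 := Real.cos_le_one _
    nlinarith
  exact le_of_forall_pos_le_add hfin
end

section
/- Let h : [0,1] → [0,∞) be a C² function with h(0) = h(1) = 0, and let c ≥ 0 and ε ≥ 0 satisfy: h''(t) ≥ -|h'(t)| - c for all t ∈ [0,1], and c ≤ sup_{[0,1]} h + ε. Then sup_{[0,1]} h ≤ ε/3. -/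
open Set

/-- Key auxiliary lemma: on an interval `[a,b]` of length at most `1/2`, if
`f'' ≥ -|f'| - c` and `f' a = 0`, then `f a - f b ≤ c/4`. -/
lemma aux_key (f f' f'' : ℝ → ℝ) (c a b : ℝ) (hc : 0 ≤ c) (hab : a ≤ b) (hb : b - a ≤ 1/2)
    (hd1 : ∀ t ∈ Set.Icc a b, HasDerivAt f (f' t) t)
    (hd2 : ∀ t ∈ Set.Icc a b, HasDerivAt f' (f'' t) t)
    (hineq : ∀ t ∈ Set.Icc a b, -|f' t| - c ≤ f'' t)
    (hfa' : f' a = 0) :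
    f a - f b ≤ c / 4 := by
  -- Step 1: Gronwall-type bound  -f' t ≤ c * (exp (t-a) - 1)
  have key : ∀ t ∈ Set.Icc a b, -f' t ≤ c * Real.exp (t - a) - c := by
    intro t ht
    have hδ : ∀ δ > (0:ℝ), -f' t ≤ (c + δ) * Real.exp ((1 + δ) * (t - a)) - c := by
      intro δ hδpos
      have := image_le_of_deriv_right_lt_deriv_boundary
        (f := fun s => -f' s) (f' := fun s => -f'' s) (a := a) (b := b)
        (B := fun s => (c + δ) * Real.exp ((1 + δ) * (s - a)) - c)
        (B' := fun s => (1 + δ) * ((c + δ) * Real.exp ((1 + δ) * (s - a))))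
        (fun s hs => ((hd2 s hs).continuousAt.neg).continuousWithinAt)
        (fun s hs => ((hd2 s (Set.mem_Icc_of_Ico hs)).neg).hasDerivWithinAt)
        (by simp [hfa']; positivity)
        (fun s => by
          have h1 : HasDerivAt (fun u : ℝ => (1 + δ) * (u - a)) (1 + δ) s := by
            simpa using ((hasDerivAt_id s).sub_const a).const_mul (1 + δ)
          have h2 := (h1.exp).const_mul (c + δ)
          have h3 := h2.sub_const c
          exact h3.congr_deriv (by ring))
        (fun s hs heq => by
          have hs' : s ∈ Set.Icc a b := Set.mem_Icc_of_Ico hs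
          have heq' : -f' s = (c + δ) * Real.exp ((1 + δ) * (s - a)) - c := heq
          show -f'' s < (1 + δ) * ((c + δ) * Real.exp ((1 + δ) * (s - a)))
          have hE : (1:ℝ) ≤ Real.exp ((1 + δ) * (s - a)) := by
            have : (0:ℝ) ≤ (1 + δ) * (s - a) := by
              have := hs.1
              nlinarith
            simpa using Real.exp_le_exp.2 this
          set E := Real.exp ((1 + δ) * (s - a)) with hEdef
          have hBpos : (0:ℝ) < (c + δ) * E - c := by nlinarith
          have habs : |f' s| = (c + δ) * E - c := by
            rw [show f' s = -((c + δ) * E - c) by linarith, abs_neg, abs_of_pos hBpos]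
          have hi := hineq s hs'
          rw [habs] at hi
          have hcE : (0:ℝ) < (c + δ) * E := by nlinarith
          nlinarith [mul_pos hδpos hcE])
      have := this (Set.mem_Icc.2 ⟨ht.1, ht.2⟩)
      simpa using this
    -- take the limit δ → 0⁺
    have htend : Filter.Tendsto (fun δ : ℝ => (c + δ) * Real.exp ((1 + δ) * (t - a)) - c)
        (nhdsWithin 0 (Set.Ioi 0)) (nhds (c * Real.exp (t - a) - c)) := by
      have hcont : Continuous (fun δ : ℝ => (c + δ) * Real.exp ((1 + δ) * (t - a)) - c) := by
        continuity
      have := hcont.tendsto 0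
      simp only [add_zero, zero_add, one_mul] at this
      exact this.mono_left nhdsWithin_le_nhds
    refine ge_of_tendsto htend ?_
    filter_upwards [self_mem_nhdsWithin] with δ hδpos
    exact hδ δ hδpos
  -- Step 2: integrate
  have hf'cont : ContinuousOn f' (Set.Icc a b) := fun s hs => (hd2 s hs).continuousAt.continuousWithinAt
  have hint1 : IntervalIntegrable (fun s => -f' s) MeasureTheory.volume a b := by
    apply ContinuousOn.intervalIntegrable
    rw [Set.uIcc_of_le hab]
    exact hf'cont.neg
  have hint2 : IntervalIntegrable (fun s => c * Real.exp (s - a) - c) MeasureTheory.volume a b := by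
    apply ContinuousOn.intervalIntegrable
    exact ((continuous_const.mul (Real.continuous_exp.comp (continuous_id.sub continuous_const))).sub
      continuous_const).continuousOn
  have hftc : ∫ s in a..b, f' s = f b - f a := by
    apply intervalIntegral.integral_eq_sub_of_hasDerivAt
    · intro s hs
      rw [Set.uIcc_of_le hab] at hs
      exact hd1 s hs
    · apply ContinuousOn.intervalIntegrable
      rw [Set.uIcc_of_le hab]
      exact hf'cont
  have hftc2 : ∫ s in a..b, (c * Real.exp (s - a) - c) =
      (c * Real.exp (b - a) - c * b) - (c * Real.exp (a - a) - c * a) := by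
    apply intervalIntegral.integral_eq_sub_of_hasDerivAt
    · intro s hs
      have h1 : HasDerivAt (fun u : ℝ => c * Real.exp (u - a) - c * u)
          (c * Real.exp (s - a) - c) s := by
        have h2 : HasDerivAt (fun u : ℝ => Real.exp (u - a)) (Real.exp (s - a)) s := by
          simpa using (((hasDerivAt_id s).sub_const a).exp)
        have h3 := (h2.const_mul c).sub ((hasDerivAt_id s).const_mul c)
        simp only [mul_one] at h3
        exact h3
      exact h1
    · exact hint2
  have hmono : ∫ s in a..b, (-f' s) ≤ ∫ s in a..b, (c * Real.exp (s - a) - c) := by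
    apply intervalIntegral.integral_mono_on hab hint1 hint2
    intro s hs
    have := key s hs
    linarith
  have hneg : ∫ s in a..b, (-f' s) = -(f b - f a) := by
    rw [intervalIntegral.integral_neg, hftc]
  rw [hneg, hftc2] at hmono
  -- Step 3: numeric bound  c*(exp L - 1 - L) ≤ c/4  for 0 ≤ L ≤ 1/2
  set L := b - a with hL
  have hL0 : 0 ≤ L := by linarith
  -- exp(1/2) ≤ 7/4
  have hsq : Real.exp (1/2) * Real.exp (1/2) = Real.exp 1 := by
    rw [← Real.exp_add]; norm_num
  have he1 : Real.exp 1 < 2.7182818286 := Real.exp_one_lt_d9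
  have hhalf : Real.exp (1/2 : ℝ) ≤ 7/4 := by
    nlinarith [Real.exp_pos (1/2 : ℝ)]
  -- convexity: exp L ≤ (1-2L)*exp 0 + 2L*exp(1/2)
  have hconv : Real.exp L ≤ (1 - 2*L) * Real.exp 0 + (2*L) * Real.exp (1/2) := by
    have := convexOn_exp.2 (Set.mem_univ (0:ℝ)) (Set.mem_univ (1/2:ℝ))
      (by linarith : (0:ℝ) ≤ 1 - 2*L) (by linarith : (0:ℝ) ≤ 2*L) (by ring)
    simpa [smul_eq_mul, mul_comm] using this
  have hexpL : Real.exp L ≤ 1 + (3/2) * L := by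
    rw [Real.exp_zero] at hconv
    nlinarith
  have hbound : c * Real.exp L - c * b - (c * Real.exp (a - a) - c * a) ≤ c / 4 := by
    rw [sub_self, Real.exp_zero]
    have : Real.exp L - 1 - L ≤ 1/4 := by nlinarith
    have h4 : c * (Real.exp L - 1 - L) ≤ c * (1/4) := by
      apply mul_le_mul_of_nonneg_left this hc
    nlinarith
  linarith

/-- If moreover `c ≤ sup_{[0,1]} h + ε`, then `sup_{[0,1]} h ≤ ε/3`. -/
theorem stmt_1 (h h' h'' : ℝ → ℝ) (c ε : ℝ)
    (hc : 0 ≤ c) (hε : 0 ≤ ε)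
    (hpos : ∀ t ∈ Set.Icc (0:ℝ) 1, 0 ≤ h t)
    (h0 : h 0 = 0) (h1 : h 1 = 0)
    (hd1 : ∀ t ∈ Set.Icc (0:ℝ) 1, HasDerivAt h (h' t) t)
    (hd2 : ∀ t ∈ Set.Icc (0:ℝ) 1, HasDerivAt h' (h'' t) t)
    (hcont : ContinuousOn h'' (Set.Icc (0:ℝ) 1))
    (hineq : ∀ t ∈ Set.Icc (0:ℝ) 1, -|h' t| - c ≤ h'' t)
    (hcsup : c ≤ sSup (h '' Set.Icc (0:ℝ) 1) + ε) :
    sSup (h '' Set.Icc (0:ℝ) 1) ≤ ε / 3 := by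
  have hhcont : ContinuousOn h (Set.Icc (0:ℝ) 1) :=
    fun t ht => (hd1 t ht).continuousAt.continuousWithinAt
  obtain ⟨t₀, ht₀, hmax⟩ := isCompact_Icc.exists_isMaxOn (Set.nonempty_Icc.2 zero_le_one) hhcont
  have hsup : sSup (h '' Set.Icc (0:ℝ) 1) = h t₀ := by
    apply IsGreatest.csSup_eq
    constructor
    · exact Set.mem_image_of_mem h ht₀
    · rintro y ⟨x, hx, rfl⟩
      exact hmax hx
  rw [hsup] at hcsup ⊢
  -- trivial cases: max at an endpoint
  rcases eq_or_lt_of_le ht₀.1 with h0t | h0t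
  · rw [← h0t, h0]; linarith
  rcases eq_or_lt_of_le ht₀.2 with h1t | h1t
  · rw [h1t, h1]; linarith
  -- interior max: derivative vanishes
  have hloc : IsLocalMax h t₀ := by
    have hnhds : Set.Icc (0:ℝ) 1 ∈ nhds t₀ := Icc_mem_nhds h0t h1t
    exact Filter.eventually_of_mem hnhds fun x hx => hmax hx
  have hder0 : h' t₀ = 0 := hloc.hasDerivAt_eq_zero (hd1 t₀ ht₀)
  -- key bound: h t₀ ≤ c / 4
  have hkey : h t₀ ≤ c / 4 := by
    rcases le_or_gt t₀ (1/2) with hhalf | hhalf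
    · -- use the left interval, reflected: F s = h (2 t₀ - s) on [t₀, 2 t₀]
      have hmem : ∀ s ∈ Set.Icc t₀ (2*t₀), (2*t₀ - s) ∈ Set.Icc (0:ℝ) 1 := by
        intro s hs
        constructor
        · linarith [hs.2]
        · have := hs.1
          have := ht₀.2
          linarith
      have hrefl : ∀ s : ℝ, HasDerivAt (fun u : ℝ => 2*t₀ - u) (-1) s := fun s => by
        simpa using (hasDerivAt_id s).const_sub (2*t₀)
      have := aux_key (fun s => h (2*t₀ - s)) (fun s => -h' (2*t₀ - s))
        (fun s => h'' (2*t₀ - s)) c t₀ (2*t₀) hc (by linarith) (by linarith)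
        (fun s hs => by
          have := (hd1 _ (hmem s hs)).comp s (hrefl s)
          exact this.congr_deriv (by ring))
        (fun s hs => by
          have := ((hd2 _ (hmem s hs)).comp s (hrefl s)).neg
          exact this.congr_deriv (by ring))
        (fun s hs => by
          have := hineq _ (hmem s hs)
          simpa [abs_neg] using this)
        (by show -h' (2*t₀ - t₀) = 0
            rw [show (2*t₀ - t₀ : ℝ) = t₀ by ring, hder0, neg_zero])
      have h2t : (2*t₀ - 2*t₀ : ℝ) = 0 := by ring
      simp only [sub_self, h2t] at this
      rw [show (2*t₀ - t₀ : ℝ) = t₀ by ring] at this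
      rw [h0] at this
      linarith
    · -- use the right interval [t₀, 1]
      have hsub : Set.Icc t₀ 1 ⊆ Set.Icc (0:ℝ) 1 := by
        apply Set.Icc_subset_Icc_left
        exact le_of_lt h0t
      have := aux_key h h' h'' c t₀ 1 hc (le_of_lt h1t) (by linarith)
        (fun t ht => hd1 t (hsub ht)) (fun t ht => hd2 t (hsub ht))
        (fun t ht => hineq t (hsub ht)) hder0
      rw [h1] at this
      linarith
  linarith
end

section
/- Let h : [0,1] → [0,∞) be a C² function with h(0) = h(1) = 0, and let c, C > 0. Assume h''(t) ≥ -C·|h'(t)| - c for all t ∈ [0,1]. Then h(t) ≤ 4·c·e^{1+C}·t·(1-t) for all t ∈ [0,1]. -/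
/-- Auxiliary: the one-sided half of the statement, for `t ≤ 1/2`. -/
lemma stmt_2_aux (h h' h'' : ℝ → ℝ) (c C : ℝ)
    (hc : 0 < c) (hC : 0 < C)
    (hpos : ∀ t ∈ Set.Icc (0:ℝ) 1, 0 ≤ h t)
    (h0 : h 0 = 0) (h1 : h 1 = 0)
    (hd1 : ∀ t ∈ Set.Icc (0:ℝ) 1, HasDerivAt h (h' t) t)
    (hd2 : ∀ t ∈ Set.Icc (0:ℝ) 1, HasDerivAt h' (h'' t) t)
    (hineq : ∀ t ∈ Set.Icc (0:ℝ) 1, -C * |h' t| - c ≤ h'' t) :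
    ∀ t ∈ Set.Icc (0:ℝ) 1, t ≤ 1/2 → h t ≤ 4 * c * Real.exp (1 + C) * t * (1 - t) := by
  intro t ht thalf
  by_contra hcon
  push_neg at hcon
  have ht0 : 0 < t := by
    rcases lt_or_eq_of_le ht.1 with h' | h'
    · exact h'
    · exfalso; rw [← h', h0] at hcon; nlinarith
  -- continuity of h and h' on [0,1]
  have hconth : ContinuousOn h (Set.Icc (0:ℝ) 1) :=
    fun x hx => ((hd1 x hx).continuousAt).continuousWithinAt
  have hconth' : ContinuousOn h' (Set.Icc (0:ℝ) 1) :=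
    fun x hx => ((hd2 x hx).continuousAt).continuousWithinAt
  -- MVT on [0,t]
  obtain ⟨s, hs, hslope⟩ := exists_hasDerivAt_eq_slope h h' ht0
    (hconth.mono (Set.Icc_subset_Icc le_rfl ht.2))
    (fun x hx => hd1 x ⟨le_of_lt hx.1, le_trans (le_of_lt hx.2) ht.2⟩)
  have hs01 : s ∈ Set.Icc (0:ℝ) 1 := ⟨le_of_lt hs.1, le_trans (le_of_lt hs.2) ht.2⟩
  have hs1 : s < 1 := lt_of_lt_of_le hs.2 ht.2
  have eC : Real.exp C > 0 := Real.exp_pos C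
  have eCb : Real.exp C - 1 ≤ C * Real.exp C := by
    have := Real.add_one_le_exp (-C)
    rw [Real.exp_neg] at this
    have h1 : (1 - C) * Real.exp C ≤ 1 := by
      rw [sub_mul, one_mul]
      calc (Real.exp C - C * Real.exp C) = Real.exp C * (1 - C) := by ring
      _ ≤ Real.exp C * (Real.exp C)⁻¹ := by
          apply mul_le_mul_of_nonneg_left _ (le_of_lt eC)
          linarith
      _ = 1 := mul_inv_cancel₀ (ne_of_gt eC)
    nlinarith
  have he1C : Real.exp (1 + C) = Real.exp 1 * Real.exp C := Real.exp_add 1 C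
  have he1 : (2:ℝ) ≤ Real.exp 1 := by
    have := Real.add_one_le_exp 1; linarith
  -- h'(s) is large
  have hs_large : c * (Real.exp C - 1) / C < h' s := by
    have hval : h' s = h t / t := by
      rw [hslope, h0]; simp
    have h2 : 2 * c * Real.exp (1 + C) < h' s := by
      rw [hval]
      rw [lt_div_iff₀ ht0]
      calc 2 * c * Real.exp (1 + C) * t
          = 4 * c * Real.exp (1 + C) * t * (1/2) := by ring
        _ ≤ 4 * c * Real.exp (1 + C) * t * (1 - t) := by
            apply mul_le_mul_of_nonneg_left (by linarith)
            positivity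
        _ < h t := hcon
    have : c * (Real.exp C - 1) / C ≤ c * Real.exp C := by
      rw [div_le_iff₀ hC]
      nlinarith
    nlinarith [mul_pos hc eC, he1, mul_le_mul_of_nonneg_left he1 (le_of_lt (mul_pos hc eC))]
  have hs_pos : 0 < h' s := by
    have : 0 ≤ c * (Real.exp C - 1) / C := by
      apply div_nonneg _ (le_of_lt hC)
      nlinarith [Real.add_one_le_exp C]
    linarith
  -- the set where h' ≤ 0 on [s,1] is empty
  set S : Set ℝ := {u | u ∈ Set.Icc s 1 ∧ h' u ≤ 0} with hS
  have hSsub : S ⊆ Set.Icc (0:ℝ) 1 := by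
    intro u hu
    exact ⟨le_trans hs01.1 hu.1.1, hu.1.2⟩
  have hSempty : S = ∅ := by
    by_contra hne
    have hSne : S.Nonempty := Set.nonempty_iff_ne_empty.mpr hne
    have hSbdd : BddBelow S := ⟨s, fun u hu => hu.1.1⟩
    have hSclosed : IsClosed S := by
      have : S = Set.Icc s 1 ∩ h' ⁻¹' Set.Iic 0 := by
        ext u; simp [hS, Set.mem_Icc]
      rw [this]
      exact ContinuousOn.preimage_isClosed_of_isClosed
        (hconth'.mono (Set.Icc_subset_Icc hs01.1 le_rfl)) isClosed_Icc isClosed_Iic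
    set T := sInf S with hT
    have hTS : T ∈ S := hSclosed.csInf_mem hSne hSbdd
    have hsT : s < T := by
      rcases lt_or_eq_of_le hTS.1.1 with h | h
      · exact h
      · exfalso; rw [← h] at hTS; linarith [hTS.2]
    have hT1 : T ≤ 1 := hTS.1.2
    have hT01 : T ∈ Set.Icc (0:ℝ) 1 := ⟨le_trans hs01.1 (le_of_lt hsT), hT1⟩
    -- h' > 0 on [s,T)
    have hpos' : ∀ u ∈ Set.Ico s T, 0 < h' u := by
      intro u hu
      by_contra hle
      push_neg at hle
      have : u ∈ S := ⟨⟨hu.1, le_trans (le_of_lt hu.2) hT1⟩, hle⟩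
      have : T ≤ u := csInf_le hSbdd this
      linarith [hu.2]
    -- f = e^{Cu}(h' u + c/C) is monotone on [s,T]
    set f : ℝ → ℝ := fun u => Real.exp (C * u) * (h' u + c / C) with hf
    have hfd : ∀ u ∈ Set.Icc (0:ℝ) 1,
        HasDerivAt f (Real.exp (C * u) * (h'' u + C * h' u + c)) u := by
      intro u hu
      have hexp : HasDerivAt (fun u => Real.exp (C * u)) (Real.exp (C * u) * C) u := by
        have := ((hasDerivAt_id u).const_mul C).exp
        simpa using this
      have := hexp.mul ((hd2 u hu).add_const (c / C))
      refine this.congr_deriv ?_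
      field_simp
      ring
    have hmono : MonotoneOn f (Set.Icc s T) := by
      apply monotoneOn_of_deriv_nonneg (convex_Icc s T)
      · apply ContinuousOn.mono _ (Set.Icc_subset_Icc hs01.1 hT1)
        intro x hx
        exact ((hfd x hx).continuousAt).continuousWithinAt
      · rw [interior_Icc]
        intro x hx
        have hx01 : x ∈ Set.Icc (0:ℝ) 1 :=
          ⟨le_trans hs01.1 (le_of_lt hx.1), le_trans (le_of_lt hx.2) hT1⟩
        exact ((hfd x hx01).differentiableAt).differentiableWithinAt
      · rw [interior_Icc]
        intro x hx
        have hx01 : x ∈ Set.Icc (0:ℝ) 1 :=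
          ⟨le_trans hs01.1 (le_of_lt hx.1), le_trans (le_of_lt hx.2) hT1⟩
        rw [(hfd x hx01).deriv]
        have hx' : 0 < h' x := hpos' x ⟨le_of_lt hx.1, hx.2⟩
        have habs : |h' x| = h' x := abs_of_pos hx'
        have := hineq x hx01
        rw [habs] at this
        have : 0 ≤ h'' x + C * h' x + c := by linarith
        positivity
    have hfsT : f s ≤ f T :=
      hmono ⟨le_rfl, le_of_lt hsT⟩ ⟨le_of_lt hsT, le_rfl⟩ (le_of_lt hsT)
    -- contradiction
    have hfs : Real.exp (C * s) * (c * Real.exp C / C) < f s := by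
      rw [hf]
      apply mul_lt_mul_of_pos_left _ (Real.exp_pos _)
      have : c * Real.exp C / C = c * (Real.exp C - 1) / C + c / C := by
        field_simp; ring
      rw [this]
      linarith
    have hfT : f T ≤ Real.exp (C * s) * Real.exp C * (c / C) := by
      rw [hf]
      have h1 : h' T + c / C ≤ c / C := by linarith [hTS.2]
      have h2 : Real.exp (C * T) ≤ Real.exp (C * s) * Real.exp C := by
        rw [← Real.exp_add]
        apply Real.exp_le_exp.mpr
        nlinarith [hs.1]
      calc Real.exp (C * T) * (h' T + c / C)
          ≤ Real.exp (C * T) * (c / C) := by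
            apply mul_le_mul_of_nonneg_left h1 (le_of_lt (Real.exp_pos _))
        _ ≤ Real.exp (C * s) * Real.exp C * (c / C) := by
            apply mul_le_mul_of_nonneg_right h2
            positivity
    have : Real.exp (C * s) * (c * Real.exp C / C)
        < Real.exp (C * s) * Real.exp C * (c / C) := by linarith
    have heq : Real.exp (C * s) * (c * Real.exp C / C)
        = Real.exp (C * s) * Real.exp C * (c / C) := by ring
    linarith [heq ▸ this]
  -- h' > 0 on [s,1], so h is strictly increasing there
  have hpos'' : ∀ u ∈ Set.Icc s 1, 0 < h' u := by
    intro u hu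
    by_contra hle
    push_neg at hle
    have : u ∈ S := ⟨hu, hle⟩
    rw [hSempty] at this
    exact this
  have hmono : StrictMonoOn h (Set.Icc s 1) := by
    apply strictMonoOn_of_deriv_pos (convex_Icc s 1)
    · exact hconth.mono (Set.Icc_subset_Icc hs01.1 le_rfl)
    · rw [interior_Icc]
      intro x hx
      have hx01 : x ∈ Set.Icc (0:ℝ) 1 :=
        ⟨le_trans hs01.1 (le_of_lt hx.1), le_of_lt hx.2⟩
      rw [(hd1 x hx01).deriv]
      exact hpos'' x ⟨le_of_lt hx.1, le_of_lt hx.2⟩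
  have : h s < h 1 := hmono ⟨le_rfl, le_of_lt hs1⟩ ⟨le_of_lt hs1, le_rfl⟩ hs1
  have := hpos s hs01
  rw [h1] at *
  linarith

/-- If `h'' t ≥ -C*|h' t| - c` on `[0,1]` with `c, C > 0`,
then `h t ≤ 4 * c * e^(1+C) * t * (1-t)` on `[0,1]`. -/
theorem stmt_2 (h h' h'' : ℝ → ℝ) (c C : ℝ)
    (hc : 0 < c) (hC : 0 < C)
    (hpos : ∀ t ∈ Set.Icc (0:ℝ) 1, 0 ≤ h t)
    (h0 : h 0 = 0) (h1 : h 1 = 0)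
    (hd1 : ∀ t ∈ Set.Icc (0:ℝ) 1, HasDerivAt h (h' t) t)
    (hd2 : ∀ t ∈ Set.Icc (0:ℝ) 1, HasDerivAt h' (h'' t) t)
    (hcont : ContinuousOn h'' (Set.Icc (0:ℝ) 1))
    (hineq : ∀ t ∈ Set.Icc (0:ℝ) 1, -C * |h' t| - c ≤ h'' t) :
    ∀ t ∈ Set.Icc (0:ℝ) 1, h t ≤ 4 * c * Real.exp (1 + C) * t * (1 - t) := by
  intro t ht
  rcases le_or_gt t (1/2) with hhalf | hhalf
  · exact stmt_2_aux h h' h'' c C hc hC hpos h0 h1 hd1 hd2 hineq t ht hhalf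
  · -- reflect: g u = h (1 - u)
    set g : ℝ → ℝ := fun u => h (1 - u) with hg
    set g' : ℝ → ℝ := fun u => -h' (1 - u) with hg'
    set g'' : ℝ → ℝ := fun u => h'' (1 - u) with hg''
    have hrefl : ∀ u : ℝ, u ∈ Set.Icc (0:ℝ) 1 → (1 - u) ∈ Set.Icc (0:ℝ) 1 := by
      intro u hu; constructor <;> [linarith [hu.2]; linarith [hu.1]]
    have hneg : ∀ u : ℝ, HasDerivAt (fun v : ℝ => 1 - v) (-1 : ℝ) u := by
      intro u
      simpa using ((hasDerivAt_id u).const_sub 1)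
    have key := stmt_2_aux g g' g'' c C hc hC
      (fun u hu => hpos (1 - u) (hrefl u hu))
      (by simp [hg, h1]) (by simp [hg, h0])
      (fun u hu => by
        have := (hd1 (1 - u) (hrefl u hu)).comp u (hneg u)
        simpa [hg, hg', mul_comm, Function.comp_def] using this)
      (fun u hu => by
        have := ((hd2 (1 - u) (hrefl u hu)).comp u (hneg u)).neg
        simpa [hg', hg'', mul_comm, Function.comp_def, Pi.neg_def] using this)
      (fun u hu => by
        have := hineq (1 - u) (hrefl u hu)
        simpa [hg', hg'', abs_neg] using this)
      (1 - t) (hrefl t ht) (by linarith)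
    have : h t ≤ 4 * c * Real.exp (1 + C) * (1 - t) * (1 - (1 - t)) := by
      simpa [hg] using key
    calc h t ≤ 4 * c * Real.exp (1 + C) * (1 - t) * (1 - (1 - t)) := this
      _ = 4 * c * Real.exp (1 + C) * t * (1 - t) := by ring
end

section
/- Let h : [0,1] → [0,∞) be a C² function with h(0) = h(1) = 0, and let a > c ≥ 0. If h''(t) ≥ -|h'(t)| - c for all t ∈ [0,1], then the function f(t) = h(t) - a·t·(1-t) attains its maximum on [0,1] only at the endpoints, i.e. max_{[0,1]} f = 0. -/
/-- With `a > c ≥ 0` and `h'' ≥ -|h'| - c` on `[0,1]`, the function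
`f t = h t - a*t*(1-t)` attains its maximum on `[0,1]` only at the endpoints,
i.e. `max_{[0,1]} f = 0`. -/
theorem stmt_4 (h h' h'' : ℝ → ℝ) (a c : ℝ)
    (hc : 0 ≤ c) (hac : c < a)
    (hpos : ∀ t ∈ Set.Icc (0:ℝ) 1, 0 ≤ h t)
    (h0 : h 0 = 0) (h1 : h 1 = 0)
    (hd1 : ∀ t ∈ Set.Icc (0:ℝ) 1, HasDerivAt h (h' t) t)
    (hd2 : ∀ t ∈ Set.Icc (0:ℝ) 1, HasDerivAt h' (h'' t) t)
    (hcont : ContinuousOn h'' (Set.Icc (0:ℝ) 1))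
    (hineq : ∀ t ∈ Set.Icc (0:ℝ) 1, -|h' t| - c ≤ h'' t) :
    sSup ((fun t => h t - a * t * (1 - t)) '' Set.Icc (0:ℝ) 1) = 0 ∧
      ∀ t ∈ Set.Icc (0:ℝ) 1, h t - a * t * (1 - t) ≤ 0 := by
  set F : ℝ → ℝ := fun t => h t - a * t * (1 - t) with hF
  -- derivative of F
  have hFd : ∀ t ∈ Set.Icc (0:ℝ) 1, HasDerivAt F (h' t - a * (1 - 2 * t)) t := by
    intro t ht
    have hp : HasDerivAt (fun s : ℝ => a * s * (1 - s)) (a * (1 - 2 * t)) t := by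
      have := (((hasDerivAt_id t).const_mul a).mul
        ((hasDerivAt_const t (1:ℝ)).sub (hasDerivAt_id t)))
      exact this.congr_deriv (by simp only [id_eq, Pi.sub_apply]; ring)
    exact (hd1 t ht).sub hp
  have hFc : ContinuousOn F (Set.Icc (0:ℝ) 1) :=
    fun t ht => ((hFd t ht).continuousAt).continuousWithinAt
  have key : ∀ t ∈ Set.Icc (0:ℝ) 1, F t ≤ 0 := by
    obtain ⟨t0, ht0, hmax⟩ := isCompact_Icc.exists_isMaxOn (Set.nonempty_Icc.2 zero_le_one) hFc
    by_contra hcontra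
    push_neg at hcontra
    obtain ⟨s, hs, hFs⟩ := hcontra
    have hFt0 : 0 < F t0 := lt_of_lt_of_le hFs (hmax hs)
    have hF0 : F 0 = 0 := by simp [hF, h0]
    have hF1 : F 1 = 0 := by simp [hF, h1]
    have ht0i : t0 ∈ Set.Ioo (0:ℝ) 1 := by
      rcases ht0.1.lt_or_eq with hlt | heq
      · rcases ht0.2.lt_or_eq with h2 | h2
        · exact ⟨hlt, h2⟩
        · exact absurd hFt0 (by simp [h2, hF1])
      · exact absurd hFt0 (by simp [← heq, hF0])
    have hnhds : Set.Icc (0:ℝ) 1 ∈ nhds t0 := Icc_mem_nhds ht0i.1 ht0i.2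
    have hlocal : IsLocalMax F t0 :=
      Filter.eventually_iff_exists_mem.2 ⟨Set.Icc 0 1, hnhds, fun y hy => hmax hy⟩
    have hcrit : h' t0 - a * (1 - 2 * t0) = 0 :=
      hlocal.hasDerivAt_eq_zero (hFd t0 ht0)
    have hcrit' : h' t0 = a * (1 - 2 * t0) := by linarith
    have habs : |h' t0| ≤ a := by
      rw [hcrit', abs_mul, abs_of_pos (lt_of_le_of_lt hc hac)]
      have : |1 - 2 * t0| ≤ 1 := by
        rw [abs_le]; constructor <;> nlinarith [ht0i.1, ht0i.2]
      nlinarith [lt_of_le_of_lt hc hac]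
    -- h'' t0 + 2a > 0
    have hpos2 : 0 < h'' t0 + 2 * a := by
      have := hineq t0 ht0
      have := abs_nonneg (h' t0)
      linarith
    -- continuity of h'' at t0
    have hcat : ContinuousAt h'' t0 := (hcont t0 ht0).continuousAt hnhds
    have hev : ∀ᶠ t in nhds t0, t ∈ Set.Icc (0:ℝ) 1 ∧ 0 < h'' t + 2 * a := by
      have hca : ContinuousAt (fun t => h'' t + 2 * a) t0 := hcat.add continuousAt_const
      have h1' : ∀ᶠ t in nhds t0, 0 < h'' t + 2 * a := hca.eventually (lt_mem_nhds hpos2)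
      filter_upwards [hnhds, h1'] with t ha hb using ⟨ha, hb⟩
    obtain ⟨ε, hε, hball⟩ := Metric.eventually_nhds_iff.1 hev
    set u : ℝ := t0 + ε / 2 with hu
    have htu : t0 < u := by rw [hu]; linarith
    have hdist : ∀ x ∈ Set.Icc t0 u, dist x t0 < ε := by
      intro x hx
      have hx1 := hx.1
      have hx2 := hx.2
      rw [Real.dist_eq, abs_lt]
      constructor <;> [linarith; linarith [hu ▸ hx2]]
    have hsub : Set.Icc t0 u ⊆ Set.Icc (0:ℝ) 1 :=
      fun x hx => (hball (hdist x hx)).1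
    have hppos : ∀ x ∈ Set.Icc t0 u, 0 < h'' x + 2 * a :=
      fun x hx => (hball (hdist x hx)).2
    -- auxiliary derivative of h' - a*(1-2t)
    have hGd : ∀ x ∈ Set.Icc (0:ℝ) 1,
        HasDerivAt (fun t => h' t - a * (1 - 2 * t)) (h'' x + 2 * a) x := by
      intro x hx'
      have hq : HasDerivAt (fun t : ℝ => a * (1 - 2 * t)) (-(2 * a)) x := by
        have := ((hasDerivAt_const x (1:ℝ)).sub ((hasDerivAt_id x).const_mul 2)).const_mul a
        exact this.congr_deriv (by ring)
      have := (hd2 x hx').sub hq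
      exact this.congr_deriv (by ring)
    have hG : StrictMonoOn (fun t => h' t - a * (1 - 2 * t)) (Set.Icc t0 u) := by
      apply strictMonoOn_of_hasDerivWithinAt_pos (convex_Icc t0 u)
      · exact fun x hx => (hGd x (hsub hx)).continuousAt.continuousWithinAt
      · exact fun x hx => (hGd x (hsub (interior_subset hx))).hasDerivWithinAt
      · exact fun x hx => hppos x (interior_subset hx)
    -- so F' > 0 on (t0, u)
    have hF'pos : ∀ x ∈ Set.Ioo t0 u, 0 < h' x - a * (1 - 2 * x) := by
      intro x hx
      have h2 := hG (Set.left_mem_Icc.2 htu.le) ⟨hx.1.le, hx.2.le⟩ hx.1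
      dsimp only at h2
      linarith [hcrit]
    -- F strictly increasing on [t0, u]
    have hFmono : StrictMonoOn F (Set.Icc t0 u) := by
      apply strictMonoOn_of_hasDerivWithinAt_pos (convex_Icc t0 u) (hFc.mono hsub)
      · exact fun x hx => (hFd x (hsub (interior_subset hx))).hasDerivWithinAt
      · intro x hx
        rw [interior_Icc] at hx
        exact hF'pos x hx
    have hlt : F t0 < F u :=
      hFmono (Set.left_mem_Icc.2 htu.le) (Set.right_mem_Icc.2 htu.le) htu
    have hle : F u ≤ F t0 := hmax (hsub (Set.right_mem_Icc.2 htu.le))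
    linarith
  refine ⟨?_, key⟩
  have hmem : (0:ℝ) ∈ F '' Set.Icc (0:ℝ) 1 :=
    ⟨0, Set.left_mem_Icc.2 zero_le_one, by simp [hF, h0]⟩
  have hbdd : BddAbove (F '' Set.Icc (0:ℝ) 1) := by
    refine ⟨0, ?_⟩
    rintro x ⟨t, ht, rfl⟩
    exact key t ht
  refine le_antisymm (Real.sSup_le ?_ le_rfl) (le_csSup hbdd hmem)
  rintro x ⟨t, ht, rfl⟩
  exact key t ht
end

section
/- Let λ = 1 + C and μ = 2c·e^{1+C}/(1+C), with c, C > 0. Suppose h : [0,1] → [0,∞) is C² with h(0) = h(1) = 0 and h''(t) ≥ -C|h'(t)| - c on [0,1]. Then for all t ∈ [0,1], h(t) ≤ μ·min{1 - e^{-λ t}, 1 - e^{-λ(1-t)}}. -/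
open Set Real

/-- One-sided barrier estimate: `h t ≤ μ (1 - e^(-λ t))` on `[0,1]`. -/
lemma stmt_5_key (h h' h'' : ℝ → ℝ) (c C : ℝ)
    (hc : 0 < c) (hC : 0 < C)
    (h0 : h 0 = 0) (h1 : h 1 = 0)
    (hd1 : ∀ t ∈ Set.Icc (0:ℝ) 1, HasDerivAt h (h' t) t)
    (hd2 : ∀ t ∈ Set.Icc (0:ℝ) 1, HasDerivAt h' (h'' t) t)
    (hineq : ∀ t ∈ Set.Icc (0:ℝ) 1, -C * |h' t| - c ≤ h'' t) :
    ∀ t ∈ Set.Icc (0:ℝ) 1,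
      h t ≤ (2 * c * Real.exp (1 + C) / (1 + C)) * (1 - Real.exp (-(1 + C) * t)) := by
  set L : ℝ := 1 + C with hLdef
  have hL : 0 < L := by positivity
  set μ : ℝ := 2 * c * Real.exp L / L with hμdef
  have hμpos : 0 < μ := by positivity
  have hμL : μ * L = 2 * c * Real.exp L := by
    rw [hμdef, div_mul_cancel₀ _ hL.ne']
  -- the difference function
  set g : ℝ → ℝ := fun t => h t - μ * (1 - Real.exp (-L * t)) with hgdef
  -- derivative of the exponential
  have hexp : ∀ t : ℝ, HasDerivAt (fun s : ℝ => Real.exp (-L * s))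
      (Real.exp (-L * t) * (-L)) t := by
    intro t
    have hlin : HasDerivAt (fun s : ℝ => -L * s) (-L) t := by
      simpa using (hasDerivAt_id t).const_mul (-L)
    exact hlin.exp
  have hgder : ∀ t ∈ Set.Icc (0:ℝ) 1,
      HasDerivAt g (h' t - μ * L * Real.exp (-L * t)) t := by
    intro t ht
    have hb : HasDerivAt (fun s : ℝ => μ * (1 - Real.exp (-L * s)))
        (μ * (0 - Real.exp (-L * t) * (-L))) t :=
      ((hasDerivAt_const t (1:ℝ)).sub (hexp t)).const_mul μ
    have := (hd1 t ht).sub hb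
    exact this.congr_deriv (by ring)
  -- continuity of g on [0,1]
  have hgc : ContinuousOn g (Set.Icc (0:ℝ) 1) := by
    apply ContinuousOn.sub
    · exact fun t ht => (hd1 t ht).continuousAt.continuousWithinAt
    · exact (continuous_const.mul (continuous_const.sub
        (Real.continuous_exp.comp (continuous_const.mul continuous_id)))).continuousOn
  -- suppose not: g attains a positive maximum
  intro t ht
  by_contra hcon
  push_neg at hcon
  have ht1pos : 0 < g t := by
    simp only [hgdef]
    linarith
  obtain ⟨t₀, ht₀, hmax⟩ := isCompact_Icc.exists_isMaxOn
    (Set.nonempty_Icc.2 (by norm_num)) hgc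
  have hgt₀ : 0 < g t₀ := lt_of_lt_of_le ht1pos (hmax ht)
  -- t₀ is interior
  have hexple : Real.exp (-L * 1) ≤ 1 := Real.exp_le_one_iff.2 (by nlinarith)
  have ht₀0 : t₀ ≠ 0 := by
    intro h'
    rw [h'] at hgt₀
    simp [hgdef, h0] at hgt₀
  have ht₀1 : t₀ ≠ 1 := by
    intro h'
    rw [h'] at hgt₀
    have : g 1 ≤ 0 := by
      simp only [hgdef, h1]
      nlinarith
    linarith
  have ht₀mem : t₀ ∈ Set.Ioo (0:ℝ) 1 :=
    ⟨lt_of_le_of_ne ht₀.1 (Ne.symm ht₀0), lt_of_le_of_ne ht₀.2 ht₀1⟩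
  -- derivative vanishes at t₀
  have hloc : IsLocalMax g t₀ := hmax.isLocalMax (Icc_mem_nhds ht₀mem.1 ht₀mem.2)
  have hder0 : h' t₀ - μ * L * Real.exp (-L * t₀) = 0 :=
    hloc.hasDerivAt_eq_zero (hgder t₀ ht₀)
  have hh'val : h' t₀ = μ * L * Real.exp (-L * t₀) := by linarith
  -- the "first derivative of g" as a function
  set G : ℝ → ℝ := fun t => h' t - μ * L * Real.exp (-L * t) with hGdef
  have hG0 : G t₀ = 0 := hder0
  -- G has positive derivative at t₀
  have hGder : HasDerivAt G (h'' t₀ + μ * L * L * Real.exp (-L * t₀)) t₀ := by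
    have hb : HasDerivAt (fun s : ℝ => μ * L * Real.exp (-L * s))
        (μ * L * (Real.exp (-L * t₀) * (-L))) t₀ := (hexp t₀).const_mul (μ * L)
    have := (hd2 t₀ ht₀).sub hb
    exact this.congr_deriv (by ring)
  have hexppos : (0:ℝ) < Real.exp (-L * t₀) := Real.exp_pos _
  have habs : |h' t₀| = μ * L * Real.exp (-L * t₀) := by
    rw [hh'val, abs_of_nonneg]; positivity
  have hbound : 2 * c ≤ μ * L * Real.exp (-L * t₀) := by
    rw [hμL, mul_assoc, ← Real.exp_add]
    have : (0:ℝ) ≤ L + -L * t₀ := by nlinarith [ht₀.2]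
    nlinarith [Real.one_le_exp this, hc]
  have hGder_pos : 0 < h'' t₀ + μ * L * L * Real.exp (-L * t₀) := by
    have h2 := hineq t₀ ht₀
    rw [habs] at h2
    -- h'' t₀ ≥ -C μ L e - c, and μ L L e - C μ L e = μ L e ≥ 2c
    have : μ * L * L * Real.exp (-L * t₀) - C * (μ * L * Real.exp (-L * t₀))
        = μ * L * Real.exp (-L * t₀) := by
      rw [hLdef]; ring
    nlinarith
  -- hence G > 0 just to the right of t₀
  have hslope : Filter.Tendsto (slope G t₀) (nhdsWithin t₀ {t₀}ᶜ)
      (nhds (h'' t₀ + μ * L * L * Real.exp (-L * t₀))) :=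
    hasDerivAt_iff_tendsto_slope.1 hGder
  have hev : ∀ᶠ s in nhdsWithin t₀ (Set.Ioi t₀), 0 < G s ∧ s < 1 := by
    have h1' : ∀ᶠ s in nhdsWithin t₀ {t₀}ᶜ, 0 < slope G t₀ s :=
      hslope.eventually (eventually_gt_nhds hGder_pos)
    have h2' : ∀ᶠ s in nhdsWithin t₀ (Set.Ioi t₀), 0 < slope G t₀ s :=
      h1'.filter_mono (nhdsWithin_mono t₀ (fun s hs => ne_of_gt hs))
    have h3' : ∀ᶠ s in nhdsWithin t₀ (Set.Ioi t₀), s < 1 :=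
      eventually_nhdsWithin_of_eventually_nhds (eventually_lt_nhds ht₀mem.2)
    filter_upwards [h2', h3', self_mem_nhdsWithin] with s hs hs1 hsIoi
    refine ⟨?_, hs1⟩
    have hst : 0 < s - t₀ := sub_pos.2 hsIoi
    have : slope G t₀ s = G s / (s - t₀) := by
      rw [slope_def_field, hG0]; field_simp; simp
    rw [this] at hs
    exact (div_pos_iff.1 hs).resolve_right (fun ⟨_, h⟩ => absurd hst (not_lt.2 h.le)) |>.1
  -- extract an interval (t₀, u) where G > 0 and u-points are < 1
  obtain ⟨u, hu, hIoo⟩ := mem_nhdsGT_iff_exists_Ioo_subset.1 hev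
  set s : ℝ := (t₀ + u) / 2 with hsdef
  have hs_mem : s ∈ Set.Ioo t₀ u := ⟨by simp [hsdef]; linarith [Set.mem_Ioi.1 hu],
    by simp [hsdef]; linarith [Set.mem_Ioi.1 hu]⟩
  have hsprop := hIoo hs_mem
  have hs1 : s ≤ 1 := hsprop.2.le
  have hts : t₀ < s := hs_mem.1
  -- mean value theorem on [t₀, s]
  have hsub : Set.Icc t₀ s ⊆ Set.Icc (0:ℝ) 1 :=
    Set.Icc_subset_Icc ht₀.1 hs1
  obtain ⟨ξ, hξ, hξval⟩ := exists_hasDerivAt_eq_slope g G hts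
    (hgc.mono hsub)
    (fun x hx => hgder x (hsub ⟨hx.1.le, hx.2.le⟩))
  -- at ξ : G ξ ≤ 0 from the max, but G ξ > 0 from the interval
  have hGξpos : 0 < G ξ := (hIoo ⟨hξ.1, hξ.2.trans hs_mem.2⟩).1
  have hgs : g s ≤ g t₀ := hmax (hsub ⟨hts.le, le_refl s⟩)
  have : G ξ ≤ 0 := by
    rw [hξval]
    apply div_nonpos_of_nonpos_of_nonneg <;> linarith
  linarith

/-- With `λ = 1 + C` and `μ = 2c e^(1+C)/(1+C)`, if `h` is C²,
nonnegative with `h 0 = h 1 = 0` and `h'' ≥ -C|h'| - c` on `[0,1]`, then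
`h t ≤ μ * min (1 - e^(-λ t)) (1 - e^(-λ (1-t)))` for all `t ∈ [0,1]`. -/
theorem stmt_5 (h h' h'' : ℝ → ℝ) (c C : ℝ)
    (hc : 0 < c) (hC : 0 < C)
    (hpos : ∀ t ∈ Set.Icc (0:ℝ) 1, 0 ≤ h t)
    (h0 : h 0 = 0) (h1 : h 1 = 0)
    (hd1 : ∀ t ∈ Set.Icc (0:ℝ) 1, HasDerivAt h (h' t) t)
    (hd2 : ∀ t ∈ Set.Icc (0:ℝ) 1, HasDerivAt h' (h'' t) t)
    (hcont : ContinuousOn h'' (Set.Icc (0:ℝ) 1))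
    (hineq : ∀ t ∈ Set.Icc (0:ℝ) 1, -C * |h' t| - c ≤ h'' t) :
    ∀ t ∈ Set.Icc (0:ℝ) 1,
      h t ≤ (2 * c * Real.exp (1 + C) / (1 + C)) *
        min (1 - Real.exp (-(1 + C) * t)) (1 - Real.exp (-(1 + C) * (1 - t))) := by
  intro t ht
  have hmem : ∀ s : ℝ, s ∈ Set.Icc (0:ℝ) 1 → (1 - s) ∈ Set.Icc (0:ℝ) 1 := by
    intro s hs
    exact ⟨by linarith [hs.2], by linarith [hs.1]⟩
  -- reflected function
  have hlin : ∀ s : ℝ, HasDerivAt (fun x : ℝ => 1 - x) (-1) s := by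
    intro s
    exact (hasDerivAt_id' s).const_sub 1
  have key2 := stmt_5_key (fun s => h (1 - s)) (fun s => -h' (1 - s)) (fun s => h'' (1 - s))
    c C hc hC (by simp [h1]) (by simp [h0])
    (fun s hs => by
      have := ((hd1 (1 - s) (hmem s hs)).comp s (hlin s))
      exact this.congr_deriv (by ring))
    (fun s hs => by
      have := (((hd2 (1 - s) (hmem s hs)).comp s (hlin s))).neg
      exact this.congr_deriv (by ring))
    (fun s hs => by simpa [abs_neg] using hineq (1 - s) (hmem s hs))
  have key1 := stmt_5_key h h' h'' c C hc hC h0 h1 hd1 hd2 hineq t ht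
  have key2' := key2 (1 - t) (hmem t ht)
  simp only [sub_sub_cancel] at key2'
  rw [mul_min_of_nonneg _ _ (by positivity)]
  exact le_min key1 key2'
end

section
/- Let R : ℝ → Mat(n,n,ℝ) be continuous with R(t) symmetric, and let J₁⁰ be the matrix solution of J̈ + R(t)J = 0 with J(0) = 0, J̇(0) = I_n, and J₀¹ the solution with J(0) = I_n, J̇(0) = 0. Then for each t, the subspace L_t := {(h,q) ∈ ℝⁿ × ℝⁿ : J₀¹(t)h + J₁⁰(t)q = 0} is a Lagrangian subspace of (ℝⁿ × ℝⁿ, σ), where σ((h,q),(h',q')) = ⟨h,q'⟩ − ⟨h',q⟩. -/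
open Matrix


/-- Entrywise derivative of `fᵀ * g`. -/
private lemma hasDerivAt_transpose_mul {n : ℕ}
    (f g f' g' : ℝ → Matrix (Fin n) (Fin n) ℝ)
    (hf : ∀ t i j, HasDerivAt (fun s => f s i j) (f' t i j) t)
    (hg : ∀ t i j, HasDerivAt (fun s => g s i j) (g' t i j) t)
    (t : ℝ) (i j : Fin n) :
    HasDerivAt (fun s => ((f s)ᵀ * g s) i j)
      (((f' t)ᵀ * g t + (f t)ᵀ * g' t) i j) t := by
  simp only [Matrix.mul_apply, Matrix.transpose_apply, Matrix.add_apply,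
    ← Finset.sum_add_distrib]
  exact HasDerivAt.fun_sum fun k _ => (hf t k i).mul (hg t k j)

/-- A matrix-valued function with zero entrywise derivative is constant. -/
private lemma matrix_const_of_deriv_zero {n : ℕ}
    (F : ℝ → Matrix (Fin n) (Fin n) ℝ)
    (h : ∀ t i j, HasDerivAt (fun s => F s i j) 0 t) (t : ℝ) : F t = F 0 := by
  ext i j
  exact is_const_of_deriv_eq_zero (fun x => (h x i j).differentiableAt)
    (fun x => (h x i j).deriv) t 0

/-- Constancy of the Wronskian `fᵀ g' - f'ᵀ g` for solutions of `J'' + R J = 0`. -/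
private lemma wronskian_const {n : ℕ}
    (R f g f' g' : ℝ → Matrix (Fin n) (Fin n) ℝ)
    (hRsymm : ∀ t, (R t)ᵀ = R t)
    (hf : ∀ t i j, HasDerivAt (fun s => f s i j) (f' t i j) t)
    (hg : ∀ t i j, HasDerivAt (fun s => g s i j) (g' t i j) t)
    (hf' : ∀ t i j, HasDerivAt (fun s => f' s i j) ((-(R t) * f t) i j) t)
    (hg' : ∀ t i j, HasDerivAt (fun s => g' s i j) ((-(R t) * g t) i j) t)
    (t : ℝ) :
    (f t)ᵀ * g' t - (f' t)ᵀ * g t = (f 0)ᵀ * g' 0 - (f' 0)ᵀ * g 0 := by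
  apply matrix_const_of_deriv_zero (fun s => (f s)ᵀ * g' s - (f' s)ᵀ * g s)
  intro s i j
  have h1 := hasDerivAt_transpose_mul f g' f' (fun u => -(R u) * g u) hf hg' s i j
  have h2 := hasDerivAt_transpose_mul f' g (fun u => -(R u) * f u) g' hf' hg s i j
  have key : ((f' s)ᵀ * g' s + (f s)ᵀ * (-(R s) * g s)) -
      ((-(R s) * f s)ᵀ * g s + (f' s)ᵀ * g' s) = 0 := by
    have : (-(R s) * f s)ᵀ = -((f s)ᵀ * R s) := by
      rw [Matrix.transpose_mul, Matrix.transpose_neg, hRsymm, Matrix.mul_neg]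
    rw [this]
    simp only [Matrix.neg_mul, Matrix.mul_neg, Matrix.mul_assoc]
    abel
  have := (h1.sub h2)
  have hval : ((f' s)ᵀ * g' s + (f s)ᵀ * (-(R s) * g s)) i j -
      ((-(R s) * f s)ᵀ * g s + (f' s)ᵀ * g' s) i j = 0 := by
    rw [← Matrix.sub_apply, key, Matrix.zero_apply]
  rw [hval] at this
  exact this

/-- dot product through `Mᵀ * N`. -/
private lemma dot_transpose_mul {n : ℕ} (M N : Matrix (Fin n) (Fin n) ℝ)
    (x y : Fin n → ℝ) :
    x ⬝ᵥ (Mᵀ * N) *ᵥ y = (M *ᵥ x) ⬝ᵥ (N *ᵥ y) := by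
  rw [← Matrix.mulVec_mulVec, Matrix.dotProduct_mulVec, Matrix.vecMul_transpose]

/-- With `J₀¹, J₁⁰` the fundamental matrix solutions of the Jacobi
equation `J̈ + R(t)J = 0` (with `J(0)=I, J̇(0)=0` resp. `J(0)=0, J̇(0)=I`, and each
`R t` symmetric), for each `t` the set
`L_t = {(h,q) : J₀¹(t)h + J₁⁰(t)q = 0}` is a Lagrangian subspace of `(ℝⁿ×ℝⁿ, σ)`. -/
theorem stmt_18 (n : ℕ) (R : ℝ → Matrix (Fin n) (Fin n) ℝ)
    (J01 J10 J01' J10' : ℝ → Matrix (Fin n) (Fin n) ℝ)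
    (hRcont : ∀ i j, Continuous fun t => R t i j)
    (hRsymm : ∀ t, (R t)ᵀ = R t)
    (hJ01_0 : J01 0 = 1) (hJ01'_0 : J01' 0 = 0)
    (hJ10_0 : J10 0 = 0) (hJ10'_0 : J10' 0 = 1)
    (hdJ01 : ∀ t i j, HasDerivAt (fun s => J01 s i j) (J01' t i j) t)
    (hdJ10 : ∀ t i j, HasDerivAt (fun s => J10 s i j) (J10' t i j) t)
    (hdJ01' : ∀ t i j, HasDerivAt (fun s => J01' s i j) ((-(R t) * J01 t) i j) t)
    (hdJ10' : ∀ t i j, HasDerivAt (fun s => J10' s i j) ((-(R t) * J10 t) i j) t) :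
    ∀ t : ℝ, ∃ L : Submodule ℝ ((Fin n → ℝ) × (Fin n → ℝ)),
      (L : Set ((Fin n → ℝ) × (Fin n → ℝ))) =
          {p | (J01 t).mulVec p.1 + (J10 t).mulVec p.2 = 0} ∧
        Module.finrank ℝ L = n ∧
        ∀ p ∈ L, ∀ q ∈ L, p.1 ⬝ᵥ q.2 - q.1 ⬝ᵥ p.2 = 0 := by
  intro t
  set A := J01 t with hA
  set B := J10 t with hB
  set C := J01' t with hC
  set D := J10' t with hD
  -- Wronskian identities
  have W1 : Aᵀ * C - Cᵀ * A = 0 := by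
    have := wronskian_const R J01 J01 J01' J01' hRsymm hdJ01 hdJ01 hdJ01' hdJ01' t
    rw [hJ01_0, hJ01'_0] at this
    simpa using this
  have W2 : Bᵀ * D - Dᵀ * B = 0 := by
    have := wronskian_const R J10 J10 J10' J10' hRsymm hdJ10 hdJ10 hdJ10' hdJ10' t
    rw [hJ10_0, hJ10'_0] at this
    simpa using this
  have W3 : Aᵀ * D - Cᵀ * B = 1 := by
    have := wronskian_const R J01 J10 J01' J10' hRsymm hdJ01 hdJ10 hdJ01' hdJ10' t
    rw [hJ01_0, hJ01'_0, hJ10_0, hJ10'_0] at this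
    simpa using this
  -- derive A * Dᵀ - B * Cᵀ = 1 via block matrices
  have hMΦ : fromBlocks Dᵀ (-Bᵀ) (-Cᵀ) Aᵀ * fromBlocks A B C D = 1 := by
    rw [Matrix.fromBlocks_multiply]
    have e1 : Dᵀ * A + -Bᵀ * C = 1 := by
      have : (Aᵀ * D - Cᵀ * B)ᵀ = (1 : Matrix (Fin n) (Fin n) ℝ)ᵀ := by rw [W3]
      simp only [Matrix.transpose_sub, Matrix.transpose_mul, Matrix.transpose_transpose,
        Matrix.transpose_one] at this
      rw [Matrix.neg_mul]
      linear_combination (norm := noncomm_ring) this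
    have e2 : Dᵀ * B + -Bᵀ * D = 0 := by
      have : (Bᵀ * D - Dᵀ * B)ᵀ = (0 : Matrix (Fin n) (Fin n) ℝ)ᵀ := by rw [W2]
      simp only [Matrix.transpose_sub, Matrix.transpose_mul, Matrix.transpose_transpose,
        Matrix.transpose_zero] at this
      rw [Matrix.neg_mul]
      linear_combination (norm := noncomm_ring) this
    have e3 : -Cᵀ * A + Aᵀ * C = 0 := by
      rw [Matrix.neg_mul]
      linear_combination (norm := noncomm_ring) W1
    have e4 : -Cᵀ * B + Aᵀ * D = 1 := by
      rw [Matrix.neg_mul]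
      linear_combination (norm := noncomm_ring) W3
    rw [e1, e2, e3, e4, Matrix.fromBlocks_one]
  have hΦM : fromBlocks A B C D * fromBlocks Dᵀ (-Bᵀ) (-Cᵀ) Aᵀ = 1 :=
    mul_eq_one_comm.mp hMΦ
  have hADBC : A * Dᵀ - B * Cᵀ = 1 := by
    rw [Matrix.fromBlocks_multiply, ← Matrix.fromBlocks_one] at hΦM
    have := (Matrix.fromBlocks_inj.mp hΦM).1
    rw [Matrix.mul_neg] at this
    linear_combination (norm := noncomm_ring) this
  -- the linear map
  set f : ((Fin n → ℝ) × (Fin n → ℝ)) →ₗ[ℝ] (Fin n → ℝ) :=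
    A.mulVecLin.comp (LinearMap.fst ℝ _ _) + B.mulVecLin.comp (LinearMap.snd ℝ _ _) with hf
  have hfapply : ∀ p : (Fin n → ℝ) × (Fin n → ℝ), f p = A *ᵥ p.1 + B *ᵥ p.2 := by
    intro p; simp [hf]
  refine ⟨LinearMap.ker f, ?_, ?_, ?_⟩
  · ext p
    simp [LinearMap.mem_ker, hfapply]
  · -- f surjective
    have hsurj : Function.Surjective f := by
      intro y
      refine ⟨(Dᵀ *ᵥ y, -(Cᵀ *ᵥ y)), ?_⟩
      rw [hfapply]
      simp only [Matrix.mulVec_neg, Matrix.mulVec_mulVec]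
      rw [← sub_eq_add_neg, ← Matrix.sub_mulVec, hADBC, Matrix.one_mulVec]
    have hrange : LinearMap.range f = ⊤ := LinearMap.range_eq_top.mpr hsurj
    have := LinearMap.finrank_range_add_finrank_ker f
    rw [hrange] at this
    rw [finrank_top, Module.finrank_prod] at this
    simp only [Module.finrank_pi, Fintype.card_fin] at this
    omega
  · intro p hp q hq
    obtain ⟨h, k⟩ := p
    obtain ⟨h', k'⟩ := q
    simp only [LinearMap.mem_ker, hfapply] at hp hq
    have hp' : A *ᵥ h = -(B *ᵥ k) := by
      rw [eq_neg_iff_add_eq_zero]; exact hp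
    have hq' : A *ᵥ h' = -(B *ᵥ k') := by
      rw [eq_neg_iff_add_eq_zero]; exact hq
    have s1 : h ⬝ᵥ k' = (A *ᵥ h) ⬝ᵥ (D *ᵥ k') - (C *ᵥ h) ⬝ᵥ (B *ᵥ k') := by
      have : h ⬝ᵥ (Aᵀ * D - Cᵀ * B) *ᵥ k' = h ⬝ᵥ k' := by rw [W3, Matrix.one_mulVec]
      rw [← this, Matrix.sub_mulVec, dotProduct_sub, dot_transpose_mul,
        dot_transpose_mul]
    have s2 : h' ⬝ᵥ k = (A *ᵥ h') ⬝ᵥ (D *ᵥ k) - (C *ᵥ h') ⬝ᵥ (B *ᵥ k) := by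
      have : h' ⬝ᵥ (Aᵀ * D - Cᵀ * B) *ᵥ k = h' ⬝ᵥ k := by rw [W3, Matrix.one_mulVec]
      rw [← this, Matrix.sub_mulVec, dotProduct_sub, dot_transpose_mul,
        dot_transpose_mul]
    have w1 : (A *ᵥ h') ⬝ᵥ (C *ᵥ h) = (C *ᵥ h') ⬝ᵥ (A *ᵥ h) := by
      have : h' ⬝ᵥ (Aᵀ * C) *ᵥ h = h' ⬝ᵥ (Cᵀ * A) *ᵥ h := by
        rw [sub_eq_zero] at W1; rw [W1]
      rwa [dot_transpose_mul, dot_transpose_mul] at this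
    have w2 : (B *ᵥ k) ⬝ᵥ (D *ᵥ k') = (D *ᵥ k) ⬝ᵥ (B *ᵥ k') := by
      have : k ⬝ᵥ (Bᵀ * D) *ᵥ k' = k ⬝ᵥ (Dᵀ * B) *ᵥ k' := by
        rw [sub_eq_zero] at W2; rw [W2]
      rwa [dot_transpose_mul, dot_transpose_mul] at this
    have hpk : B *ᵥ k = -(A *ᵥ h) := by rw [hp']; ring
    have hqk : B *ᵥ k' = -(A *ᵥ h') := by rw [hq']; ring
    have f1 : (C *ᵥ h) ⬝ᵥ (B *ᵥ k') = -((C *ᵥ h) ⬝ᵥ (A *ᵥ h')) := by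
      rw [hqk, dotProduct_neg]
    have f2 : (C *ᵥ h') ⬝ᵥ (B *ᵥ k) = -((C *ᵥ h') ⬝ᵥ (A *ᵥ h)) := by
      rw [hpk, dotProduct_neg]
    rw [s1, s2, hp', hq']
    simp only [neg_dotProduct, dotProduct_neg]
    have c1 : (C *ᵥ h) ⬝ᵥ (A *ᵥ h') = (A *ᵥ h') ⬝ᵥ (C *ᵥ h) := dotProduct_comm _ _
    have c2 : (C *ᵥ h') ⬝ᵥ (A *ᵥ h) = (A *ᵥ h) ⬝ᵥ (C *ᵥ h') := dotProduct_comm _ _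
    have c3 : (D *ᵥ k) ⬝ᵥ (B *ᵥ k') = (B *ᵥ k') ⬝ᵥ (D *ᵥ k) := dotProduct_comm _ _
    linarith [w1, w2, c1, c2, c3, f1, f2]
end
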